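/- Let B and D be m×n real matrices with m ≤ n, and let D = Σ_{i=1}^m σ_i x_i y_iᵀ be a singular value decomposition of D with σ_1 ≥ … ≥ σ_m. Fix δ > 0 and define B̂ = Σ_{i : σ_i > (1+δ)‖D − B‖} σ_i x_i y_iᵀ, where ‖·‖ is the operator (spectral) norm. Then ‖B̂ − B‖_F ≤ K(δ)·(‖D − B‖·‖B‖_*)^{1/2}, where K(δ) = (4 + 2δ)√(2/δ) + √(2 + δ). -/

import Mathlib

open MeasureTheory ProbabilityTheory Filter Matrix

noncomputable section

/-- Singular values of a real `m × n` matrix, in decreasing order (`0`-indexed):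
`svalsDesc A 0 ≥ svalsDesc A 1 ≥ …` (the square roots of the eigenvalues of `A Aᵀ`). -/
def svalsDesc {m n : ℕ} (A : Matrix (Fin m) (Fin n) ℝ) : Fin m → ℝ := fun i =>
  let hA : (A * Aᴴ).IsHermitian := Matrix.isHermitian_mul_conjTranspose_self A
  Real.sqrt (hA.eigenvalues (Tuple.sort hA.eigenvalues i.rev))

/-- `sval A k` is the `k`-th largest singular value `λ_k(A)` (`1`-indexed), with junk
value `0` if `k` is out of range. -/
def sval {m n : ℕ} (A : Matrix (Fin m) (Fin n) ℝ) (k : ℕ) : ℝ :=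
  if h : k - 1 < m then svalsDesc A ⟨k - 1, h⟩ else 0

/-- Nuclear norm `‖A‖_* = Σ_i λ_i(A)`. -/
def nuclearNorm {m n : ℕ} (A : Matrix (Fin m) (Fin n) ℝ) : ℝ :=
  ∑ i : Fin m, svalsDesc A i

/-- Squared Frobenius norm `‖A‖_F² = Σ_{ij} A_{ij}²`. -/
def frobSq {m n : ℕ} (A : Matrix (Fin m) (Fin n) ℝ) : ℝ :=
  ∑ i : Fin m, ∑ j : Fin n, (A i j) ^ 2

/-- Operator (spectral) norm: the largest singular value. -/
def opNorm {m n : ℕ} (A : Matrix (Fin m) (Fin n) ℝ) : ℝ := sval A 1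

/-- Density of the Marčenko–Pastur distribution with parameter `γ`:
`(1/(2πγx))·√((γ₊ − x)(x − γ₋))` on `[γ₋, γ₊]`, where `γ± = (1 ± √γ)²`. -/
def mpDensity (γ : ℝ) (x : ℝ) : ℝ :=
  if (1 - Real.sqrt γ) ^ 2 ≤ x ∧ x ≤ (1 + Real.sqrt γ) ^ 2 then
    Real.sqrt (((1 + Real.sqrt γ) ^ 2 - x) * (x - (1 - Real.sqrt γ) ^ 2)) / (2 * Real.pi * γ * x)
  else 0

/-- CDF `F_γ` of the Marčenko–Pastur distribution with parameter `γ`. -/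
def mpCDF (γ : ℝ) (x : ℝ) : ℝ := ∫ t in Set.Iic x, mpDensity γ t

/-- Quantile function `F⁻¹(p) = inf {x | F x ≥ p}`. -/
def quantileOf (F : ℝ → ℝ) (p : ℝ) : ℝ := sInf {x | p ≤ F x}

/-- Quantile function of the Marčenko–Pastur distribution. -/
def mpQuantile (γ : ℝ) (p : ℝ) : ℝ := quantileOf (mpCDF γ) p

/-- `μ_γ = F_γ⁻¹(1/2)`, the median of the Marčenko–Pastur distribution. -/
def mpMedian (γ : ℝ) : ℝ := mpQuantile γ (1 / 2)

/-- A law on `ℝ` is sub-Gaussian if its moment generating function satisfies a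
sub-Gaussian bound. -/
def IsSubGaussianLaw (ν : Measure ℝ) : Prop :=
  ∃ c > 0, ∀ t : ℝ, ∫ x, Real.exp (t * x) ∂ν ≤ Real.exp (c * t ^ 2)

/-- The entries of the random matrix `A` are i.i.d. with common law `ν`. -/
def IIDEntries {Ω : Type*} [MeasurableSpace Ω] (μ : Measure Ω) {m n : ℕ}
    (A : Ω → Matrix (Fin m) (Fin n) ℝ) (ν : Measure ℝ) : Prop :=
  (∀ i j, Measurable fun ω => A ω i j) ∧
  (∀ i j, Measure.map (fun ω => A ω i j) μ = ν) ∧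
  iIndepFun (m := fun _ : Fin m × Fin n => Real.measurableSpace) (fun p ω => A ω p.1 p.2) μ

/-- The Gavish–Donoho estimator `σ̂ = λ_{m/2}(X) / √(n μ_γ)` (the median singular value,
`m` even, normalized by `√(n μ_γ)`). -/
def sigmaHat {m n : ℕ} (γ : ℝ) (X : Matrix (Fin m) (Fin n) ℝ) : ℝ :=
  sval X (m / 2) / Real.sqrt (n * mpMedian γ)

/-- `u`, `v` together with the singular values of `X` form a singular value
decomposition `X = Σ_i λ_i(X) uᵢ vᵢᵀ` of `X` (with `uᵢ`, `vᵢ` orthonormal families). -/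
def IsSVD {m n : ℕ} (X : Matrix (Fin m) (Fin n) ℝ)
    (u : Fin m → Fin m → ℝ) (v : Fin m → Fin n → ℝ) : Prop :=
  (∀ i j, ∑ k, u i k * u j k = if i = j then 1 else 0) ∧
  (∀ i j, ∑ k, v i k * v j k = if i = j then 1 else 0) ∧
  X = ∑ i : Fin m, svalsDesc X i • Matrix.vecMulVec (u i) (v i)

/-- Singular value thresholding: keep the part of the SVD `X = Σ_i λ_i(X) uᵢ vᵢᵀ`
with singular values `≥ τ`.  With `τ = (2+η) σ̂ √n` this is the modified USVT
estimator `M̂`. -/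
def usvtFrom {m n : ℕ} (X : Matrix (Fin m) (Fin n) ℝ)
    (u : Fin m → Fin m → ℝ) (v : Fin m → Fin n → ℝ) (τ : ℝ) : Matrix (Fin m) (Fin n) ℝ :=
  ∑ i ∈ Finset.univ.filter (fun i => τ ≤ svalsDesc X i),
    svalsDesc X i • Matrix.vecMulVec (u i) (v i)


namespace SVTaux

def dot {p : ℕ} (u v : Fin p → ℝ) : ℝ := ∑ k, u k * v k

lemma dot_comm {p : ℕ} (u v : Fin p → ℝ) : dot u v = dot v u :=
  Finset.sum_congr rfl fun k _ => mul_comm _ _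

lemma swap_sum {p : ℕ} {ι : Type*} (s : Finset ι) (f : ι → Fin p → ℝ) :
    (∑ k, ∑ i ∈ s, f i k) = ∑ i ∈ s, ∑ k, f i k := Finset.sum_comm

lemma euclid_sum_apply {m : ℕ} {ι : Type*} [DecidableEq ι] (s : Finset ι)
    (f : ι → EuclideanSpace ℝ (Fin m)) (i : Fin m) :
    (∑ j ∈ s, f j) i = ∑ j ∈ s, f j i := by
  induction s using Finset.induction with
  | empty => rfl
  | insert _ _ h ih => rw [Finset.sum_insert h, Finset.sum_insert h, PiLp.add_apply, ih]

lemma opNorm_nonneg {m n : ℕ} (A : Matrix (Fin m) (Fin n) ℝ) : 0 ≤ opNorm A := by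
  rw [opNorm, sval]
  split_ifs
  · exact Real.sqrt_nonneg _
  · exact le_refl 0

/-- Spectral package for `A * Aᴴ`. -/
lemma spectral {m n : ℕ} (A : Matrix (Fin m) (Fin n) ℝ) :
    ∃ (lam : Fin m → ℝ) (a : Fin m → Fin m → ℝ),
      (∀ j, 0 ≤ lam j) ∧
      (∀ i j, dot (a i) (a j) = if i = j then (1:ℝ) else 0) ∧
      (∀ j i, (∑ k, (A * Aᴴ) i k * a j k) = lam j * a j i) ∧
      (∀ w : Fin m → ℝ, ∀ i, (∑ j, dot w (a j) * a j i) = w i) ∧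
      ((∑ j, Real.sqrt (lam j)) = nuclearNorm A) ∧
      (∀ j, Real.sqrt (lam j) ≤ opNorm A) := by
  set hH := Matrix.isHermitian_mul_conjTranspose_self A with hHdef
  refine ⟨hH.eigenvalues, fun j => ⇑(hH.eigenvectorBasis j), ?_, ?_, ?_, ?_, ?_, ?_⟩
  · exact fun j => (Matrix.posSemidef_self_mul_conjTranspose A).eigenvalues_nonneg j
  · intro i j
    rcases hH.eigenvectorBasis.orthonormal with ⟨h1, h2⟩
    by_cases hij : i = j
    · subst hij
      have h3 : Real.sqrt (∑ k, ‖hH.eigenvectorBasis i k‖^2) = 1 := by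
        rw [← EuclideanSpace.norm_eq]; exact h1 i
      have h4 := congrArg (·^2) h3
      simp only [one_pow] at h4
      rw [Real.sq_sqrt (by positivity)] at h4
      simp only [if_pos rfl]
      simpa [dot, Real.norm_eq_abs, sq_abs, sq] using h4
    · have h4 : (inner ℝ (hH.eigenvectorBasis i) (hH.eigenvectorBasis j) : ℝ) = 0 := h2 hij
      rw [PiLp.inner_apply] at h4
      simp only [if_neg hij, dot]
      simpa [mul_comm] using h4
  · intro j i
    have h := congrFun (hH.mulVec_eigenvectorBasis j) i
    simpa [Matrix.mulVec, dotProduct] using h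
  · intro w i
    have h2 : (∑ j, hH.eigenvectorBasis.repr (WithLp.toLp 2 w) j • hH.eigenvectorBasis j) i
        = (WithLp.toLp 2 w) i := by
      rw [hH.eigenvectorBasis.sum_repr (WithLp.toLp 2 w)]
    rw [euclid_sum_apply] at h2
    simp only [PiLp.smul_apply, smul_eq_mul, OrthonormalBasis.repr_apply_apply, PiLp.inner_apply,
      RCLike.inner_apply, starRingEnd_apply, star_trivial] at h2
    rw [← h2]
    exact Finset.sum_congr rfl fun j _ => by
      rw [show dot w ⇑(hH.eigenvectorBasis j) = ∑ k, hH.eigenvectorBasis j k * w k from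
        Finset.sum_congr rfl fun k _ => mul_comm _ _]
      exact congrArg (· * _) (Finset.sum_congr rfl fun k _ => mul_comm _ _)
  · rw [nuclearNorm]
    have he : ∀ i : Fin m, svalsDesc A i
        = Real.sqrt (hH.eigenvalues (Tuple.sort hH.eigenvalues i.rev)) := fun i => rfl
    simp only [he]
    exact (Equiv.sum_comp (Fin.revPerm.trans (Tuple.sort hH.eigenvalues))
      (fun j => Real.sqrt (hH.eigenvalues j))).symm ▸ rfl
  · intro j
    have hm : 0 < m := j.pos
    have hop : opNorm A = Real.sqrt (hH.eigenvalues (Tuple.sort hH.eigenvalues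
        ((⟨0, by omega⟩ : Fin m)).rev)) := by
      rw [opNorm, sval, dif_pos (by omega : 1 - 1 < m)]
      rfl
    rw [hop]
    apply Real.sqrt_le_sqrt
    have hmono := Tuple.monotone_sort hH.eigenvalues
    have h1 : hH.eigenvalues j
        = (hH.eigenvalues ∘ Tuple.sort hH.eigenvalues) ((Tuple.sort hH.eigenvalues).symm j) := by
      simp
    rw [h1]
    apply hmono
    rw [Fin.le_def]
    have := ((Tuple.sort hH.eigenvalues).symm j).isLt
    simp [Fin.rev]
    omega

/-- Bessel's inequality for a pairwise-orthogonal family with norms `≤ 1`. -/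
lemma bessel {p : ℕ} {ι : Type*} (s : Finset ι) (v : ι → Fin p → ℝ)
    (horth : ∀ i ∈ s, ∀ j ∈ s, i ≠ j → dot (v i) (v j) = 0)
    (hunit : ∀ i ∈ s, dot (v i) (v i) ≤ 1)
    (w : Fin p → ℝ) : (∑ i ∈ s, (dot w (v i))^2) ≤ dot w w := by
  classical
  set c : ι → ℝ := fun i => dot w (v i) with hc
  have key : (0:ℝ) ≤ ∑ k, (w k - ∑ i ∈ s, c i * v i k)^2 :=
    Finset.sum_nonneg fun k _ => sq_nonneg _
  have cross : (∑ k, w k * ∑ i ∈ s, c i * v i k) = ∑ i ∈ s, c i ^ 2 := by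
    have : ∀ k, w k * ∑ i ∈ s, c i * v i k = ∑ i ∈ s, c i * (w k * v i k) := fun k => by
      rw [Finset.mul_sum]; exact Finset.sum_congr rfl fun i _ => by ring
    simp only [this]
    rw [swap_sum]
    refine Finset.sum_congr rfl fun i _ => ?_
    rw [← Finset.mul_sum]
    simp only [hc, dot, sq]
  have sqterm : (∑ k, (∑ i ∈ s, c i * v i k)^2) = ∑ i ∈ s, c i ^ 2 * dot (v i) (v i) := by
    have e : ∀ k, (∑ i ∈ s, c i * v i k)^2
        = ∑ i ∈ s, ∑ j ∈ s, (c i * c j) * (v i k * v j k) := fun k => by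
      rw [sq, Finset.sum_mul_sum]
      exact Finset.sum_congr rfl fun i _ => Finset.sum_congr rfl fun j _ => by ring
    simp only [e]
    rw [swap_sum]
    refine Finset.sum_congr rfl fun i hi => ?_
    rw [swap_sum]
    have e2 : ∀ j ∈ s, (∑ k, (c i * c j) * (v i k * v j k)) = (c i * c j) * dot (v i) (v j) :=
      fun j _ => by rw [dot, Finset.mul_sum]
    rw [Finset.sum_congr rfl e2]
    rw [Finset.sum_eq_single i (fun j hj hne => by rw [horth i hi j hj (Ne.symm hne), mul_zero])
      (fun h => absurd hi h)]
    ring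
  have expand : (∑ k, (w k - ∑ i ∈ s, c i * v i k)^2)
      = dot w w - 2 * (∑ i ∈ s, c i ^ 2) + ∑ i ∈ s, c i ^ 2 * dot (v i) (v i) := by
    have e1 : ∀ k, (w k - ∑ i ∈ s, c i * v i k)^2
        = w k * w k - 2 * (w k * ∑ i ∈ s, c i * v i k) + (∑ i ∈ s, c i * v i k)^2 :=
      fun k => by ring
    simp only [e1]
    rw [Finset.sum_add_distrib, Finset.sum_sub_distrib, ← Finset.mul_sum, cross, sqterm]
    rfl
  rw [expand] at key
  have bnd : (∑ i ∈ s, c i ^ 2 * dot (v i) (v i)) ≤ ∑ i ∈ s, c i ^ 2 := by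
    refine Finset.sum_le_sum fun i hi => ?_
    have h1 : dot (v i) (v i) ≤ 1 := hunit i hi
    nlinarith [sq_nonneg (c i)]
  nlinarith
lemma wdot {m n : ℕ} (A : Matrix (Fin m) (Fin n) ℝ) (lam : Fin m → ℝ) (a : Fin m → Fin m → ℝ)
    (haorth : ∀ i j, dot (a i) (a j) = if i = j then (1:ℝ) else 0)
    (haeig : ∀ j i, (∑ k, (A * Aᴴ) i k * a j k) = lam j * a j i) (j j' : Fin m) :
    dot (fun k => ∑ i, a j i * A i k) (fun k => ∑ i, a j' i * A i k)
      = if j = j' then lam j else 0 := by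
  have hH : ∀ i i', (A * Aᴴ) i i' = ∑ k, A i k * A i' k := by
    intro i i'
    simp [Matrix.mul_apply, Matrix.conjTranspose_apply]
  have step1 : dot (fun k => ∑ i, a j i * A i k) (fun k => ∑ i, a j' i * A i k)
      = ∑ i, ∑ i', (a j i * a j' i') * ((A * Aᴴ) i i') := by
    rw [dot]
    have e : ∀ k, (∑ i, a j i * A i k) * (∑ i', a j' i' * A i' k)
        = ∑ i, ∑ i', (a j i * a j' i') * (A i k * A i' k) := by
      intro k
      rw [Finset.sum_mul_sum]
      exact Finset.sum_congr rfl fun i _ => Finset.sum_congr rfl fun i' _ => by ring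
    simp only [e]
    rw [swap_sum]
    refine Finset.sum_congr rfl fun i _ => ?_
    rw [swap_sum]
    refine Finset.sum_congr rfl fun i' _ => ?_
    rw [hH, Finset.mul_sum]
  rw [step1]
  have step2 : ∀ i, (∑ i', (a j i * a j' i') * ((A * Aᴴ) i i'))
      = a j i * (lam j' * a j' i) := by
    intro i
    have := haeig j' i
    calc (∑ i', (a j i * a j' i') * ((A * Aᴴ) i i'))
        = a j i * ∑ i', (A * Aᴴ) i i' * a j' i' := by
          rw [Finset.mul_sum]; exact Finset.sum_congr rfl fun i' _ => by ring
      _ = a j i * (lam j' * a j' i) := by rw [haeig j' i]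
  simp only [step2]
  have : (∑ i, a j i * (lam j' * a j' i)) = lam j' * dot (a j) (a j') := by
    rw [dot, Finset.mul_sum]
    exact Finset.sum_congr rfl fun i _ => by ring
  rw [this, haorth]
  by_cases h : j = j'
  · subst h; simp
  · simp [h]

lemma repr' {m n : ℕ} (A : Matrix (Fin m) (Fin n) ℝ) (a : Fin m → Fin m → ℝ)
    (hacomp : ∀ w : Fin m → ℝ, ∀ i, (∑ j, dot w (a j) * a j i) = w i) (i : Fin m) (k : Fin n) :
    A i k = ∑ j, a j i * (∑ i', a j i' * A i' k) := by
  have h := hacomp (fun i' => A i' k) i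
  rw [← h]
  refine Finset.sum_congr rfl fun j _ => ?_
  rw [dot]
  rw [show (∑ k_1, A k_1 k * a j k_1) = ∑ i', a j i' * A i' k from
    Finset.sum_congr rfl fun i' _ => mul_comm _ _]
  ring
/-- Existence of an SVD with all the properties we need. -/
lemma exists_svd {m n : ℕ} (A : Matrix (Fin m) (Fin n) ℝ) :
    ∃ (s : Fin m → ℝ) (u : Fin m → Fin m → ℝ) (v : Fin m → Fin n → ℝ),
      (∀ j, 0 ≤ s j) ∧
      (∀ i j, dot (u i) (u j) = if i = j then (1:ℝ) else 0) ∧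
      (∀ i j, i ≠ j → dot (v i) (v j) = 0) ∧
      (∀ i, dot (v i) (v i) ≤ 1) ∧
      (∀ i, s i ≠ 0 → dot (v i) (v i) = 1) ∧
      (∀ i k, A i k = ∑ j, s j * (u j i * v j k)) ∧
      ((∑ j, s j) = nuclearNorm A) ∧
      (∀ j, s j ≤ opNorm A) ∧
      ((∑ j, (s j)^2) = frobSq A) := by
  obtain ⟨lam, a, hlam0, haorth, haeig, hacomp, hnuc, hopb⟩ := spectral A
  set s : Fin m → ℝ := fun j => Real.sqrt (lam j) with hs
  set w : Fin m → Fin n → ℝ := fun j k => ∑ i, a j i * A i k with hwdef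
  have hw : ∀ j j', dot (w j) (w j') = if j = j' then lam j else 0 :=
    fun j j' => wdot A lam a haorth haeig j j'
  have hsq : ∀ j, (s j)^2 = lam j := fun j => Real.sq_sqrt (hlam0 j)
  set v : Fin m → Fin n → ℝ := fun j k => (s j)⁻¹ * w j k with hvdef
  have hzero : ∀ j, s j = 0 → ∀ k, w j k = 0 := by
    intro j hj k
    have h1 : lam j = 0 := by
      have := hsq j; rw [hj] at this; simpa using this.symm
    have h2 : dot (w j) (w j) = 0 := by rw [hw]; simp [h1]
    rw [dot] at h2
    have h3 := (Finset.sum_eq_zero_iff_of_nonneg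
      (fun k _ => mul_self_nonneg (w j k))).1 h2 k (Finset.mem_univ k)
    exact mul_self_eq_zero.1 h3
  have hsv : ∀ j k, s j * v j k = w j k := by
    intro j k
    by_cases hj : s j = 0
    · rw [hj, zero_mul, hzero j hj k]
    · rw [hvdef]; field_simp
  have hvdot : ∀ j j', dot (v j) (v j')
      = (s j)⁻¹ * ((s j')⁻¹ * (if j = j' then lam j else 0)) := by
    intro j j'
    calc dot (v j) (v j') = ∑ k, (s j)⁻¹ * ((s j')⁻¹ * (w j k * w j' k)) :=
          Finset.sum_congr rfl fun k _ => by simp only [hvdef]; ring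
      _ = (s j)⁻¹ * ((s j')⁻¹ * dot (w j) (w j')) := by
          rw [dot, ← Finset.mul_sum, ← Finset.mul_sum]
      _ = _ := by rw [hw j j']
  refine ⟨s, a, v, fun j => Real.sqrt_nonneg _, haorth, ?_, ?_, ?_, ?_, hnuc, hopb, ?_⟩
  · intro i j hij
    rw [hvdot]; simp [hij]
  · intro i
    rw [hvdot]
    simp only [if_pos rfl]
    by_cases hi : s i = 0
    · rw [hi]; simp
    · rw [← hsq i]
      simp only [if_true, ↓reduceIte]
      rw [show (s i)⁻¹ * ((s i)⁻¹ * (s i)^2) = 1 by field_simp]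
  · intro i hi
    rw [hvdot]
    simp only [if_pos rfl, ← hsq i]
    field_simp
    simp
  · intro i k
    have h1 := repr' A a hacomp i k
    rw [h1]
    refine Finset.sum_congr rfl fun j _ => ?_
    rw [show (∑ i', a j i' * A i' k) = w j k from rfl, ← hsv j k]
    ring
  · -- frobSq
    have hfs : frobSq A = ∑ k, ∑ i, A i k * A i k := by
      rw [frobSq]
      rw [show (∑ i, ∑ j, (A i j)^2) = ∑ i, ∑ j, A i j * A i j from
        Finset.sum_congr rfl fun i _ => Finset.sum_congr rfl fun j _ => sq (A i j)]
      exact Finset.sum_comm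
    have hstep : ∀ k, (∑ i, A i k * A i k) = ∑ j, w j k * w j k := by
      intro k
      calc (∑ i, A i k * A i k) = ∑ i, (∑ j, a j i * w j k) * A i k :=
            Finset.sum_congr rfl fun i _ => by rw [← repr' A a hacomp i k]
        _ = ∑ i, ∑ j, w j k * (a j i * A i k) :=
            Finset.sum_congr rfl fun i _ => by
              rw [Finset.sum_mul]; exact Finset.sum_congr rfl fun j _ => by ring
        _ = ∑ j, ∑ i, w j k * (a j i * A i k) := Finset.sum_comm
        _ = ∑ j, w j k * w j k := Finset.sum_congr rfl fun j _ => by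
            rw [← Finset.mul_sum, hwdef]
    have : frobSq A = ∑ j, dot (w j) (w j) := by
      rw [hfs]
      simp only [hstep]
      rw [swap_sum]
      rfl
    rw [this]
    exact Finset.sum_congr rfl fun j _ => by rw [hw j j, if_pos rfl, hsq j]

/-- Bilinear form bound by the operator norm. -/
lemma bil_le_opNorm {m n : ℕ} (E : Matrix (Fin m) (Fin n) ℝ) (u : Fin m → ℝ) (v : Fin n → ℝ) :
    (∑ i, ∑ k, u i * E i k * v k)
      ≤ opNorm E * (Real.sqrt (dot u u) * Real.sqrt (dot v v)) := by
  obtain ⟨lam, a, hlam0, haorth, haeig, hacomp, hnuc, hopb⟩ := spectral E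
  set g : Fin n → ℝ := fun k => ∑ i, u i * E i k with hg
  have step1 : (∑ i, ∑ k, u i * E i k * v k) = ∑ k, g k * v k := by
    rw [Finset.sum_comm]
    refine Finset.sum_congr rfl fun k _ => ?_
    rw [hg, Finset.sum_mul]
  have step2 : (∑ k, g k * v k) ≤ Real.sqrt (∑ k, (g k)^2) * Real.sqrt (∑ k, (v k)^2) := by
    exact Real.sum_mul_le_sqrt_mul_sqrt _ _ _
  set c : Fin m → ℝ := fun j => dot u (a j) with hc
  set w : Fin m → Fin n → ℝ := fun j k => ∑ i, a j i * E i k with hwdef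
  have hw : ∀ j j', dot (w j) (w j') = if j = j' then lam j else 0 :=
    fun j j' => wdot E lam a haorth haeig j j'
  have hgw : ∀ k, g k = ∑ j, c j * w j k := by
    intro k
    calc g k = ∑ i, (∑ j, dot u (a j) * a j i) * E i k :=
          Finset.sum_congr rfl fun i _ => by rw [hacomp u i]
      _ = ∑ i, ∑ j, c j * (a j i * E i k) := Finset.sum_congr rfl fun i _ => by
          rw [Finset.sum_mul]; exact Finset.sum_congr rfl fun j _ => by rw [hc]; ring
      _ = ∑ j, ∑ i, c j * (a j i * E i k) := Finset.sum_comm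
      _ = ∑ j, c j * w j k := Finset.sum_congr rfl fun j _ => by rw [← Finset.mul_sum, hwdef]
  have parseval : (∑ j, (c j)^2) = dot u u := by
    calc (∑ j, (c j)^2) = ∑ j, c j * dot u (a j) := Finset.sum_congr rfl fun j _ => by
          rw [hc, sq]
      _ = ∑ j, ∑ i, u i * (c j * a j i) := Finset.sum_congr rfl fun j _ => by
          rw [dot, Finset.mul_sum]; exact Finset.sum_congr rfl fun i _ => by ring
      _ = ∑ i, ∑ j, u i * (c j * a j i) := Finset.sum_comm
      _ = ∑ i, u i * u i := Finset.sum_congr rfl fun i _ => by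
          rw [← Finset.mul_sum]
          congr 1
          calc (∑ j, c j * a j i) = ∑ j, dot u (a j) * a j i :=
                Finset.sum_congr rfl fun j _ => rfl
            _ = u i := hacomp u i
      _ = dot u u := rfl
  have gsq : (∑ k, (g k)^2) = ∑ j, (c j)^2 * lam j := by
    have e : ∀ k, (g k)^2 = ∑ j, ∑ j', (c j * c j') * (w j k * w j' k) := by
      intro k
      rw [hgw k, sq, Finset.sum_mul_sum]
      exact Finset.sum_congr rfl fun j _ => Finset.sum_congr rfl fun j' _ => by ring
    simp only [e]
    rw [swap_sum]
    refine Finset.sum_congr rfl fun j _ => ?_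
    rw [swap_sum]
    have e2 : ∀ j' ∈ Finset.univ, (∑ k, (c j * c j') * (w j k * w j' k))
        = (c j * c j') * dot (w j) (w j') := fun j' _ => by rw [dot, Finset.mul_sum]
    rw [Finset.sum_congr rfl e2]
    rw [Finset.sum_eq_single j (fun j' _ hne => by rw [hw j j', if_neg (Ne.symm hne), mul_zero])
      (fun h => absurd (Finset.mem_univ j) h)]
    rw [hw j j, if_pos rfl]
    ring
  have glam : (∑ j, (c j)^2 * lam j) ≤ (opNorm E)^2 * dot u u := by
    rw [← parseval, Finset.mul_sum]
    refine Finset.sum_le_sum fun j _ => ?_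
    have h1 : lam j ≤ (opNorm E)^2 := by
      have h2 := hopb j
      have h3 : (Real.sqrt (lam j))^2 ≤ (opNorm E)^2 :=
        pow_le_pow_left₀ (Real.sqrt_nonneg _) h2 2
      rwa [Real.sq_sqrt (hlam0 j)] at h3
    nlinarith [sq_nonneg (c j)]
  have dotv : (∑ k, (v k)^2) = dot v v := Finset.sum_congr rfl fun k _ => sq (v k)
  have dotu0 : 0 ≤ dot u u := Finset.sum_nonneg fun k _ => mul_self_nonneg _
  calc (∑ i, ∑ k, u i * E i k * v k) = ∑ k, g k * v k := step1
    _ ≤ Real.sqrt (∑ k, (g k)^2) * Real.sqrt (∑ k, (v k)^2) := step2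
    _ ≤ Real.sqrt ((opNorm E)^2 * dot u u) * Real.sqrt (dot v v) := by
        rw [dotv]
        exact mul_le_mul_of_nonneg_right
          (Real.sqrt_le_sqrt (by rw [gsq]; exact glam)) (Real.sqrt_nonneg _)
    _ = opNorm E * (Real.sqrt (dot u u) * Real.sqrt (dot v v)) := by
        rw [Real.sqrt_mul (sq_nonneg _), Real.sqrt_sq (opNorm_nonneg E), mul_assoc]
def bil {m n : ℕ} (u : Fin m → ℝ) (A : Matrix (Fin m) (Fin n) ℝ) (v : Fin n → ℝ) : ℝ :=
  ∑ i, ∑ k, u i * A i k * v k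

lemma bil_sub {m n : ℕ} (u : Fin m → ℝ) (A C : Matrix (Fin m) (Fin n) ℝ) (v : Fin n → ℝ) :
    bil u (A - C) v = bil u A v - bil u C v := by
  rw [bil, bil, bil, ← Finset.sum_sub_distrib]
  refine Finset.sum_congr rfl fun i _ => ?_
  rw [← Finset.sum_sub_distrib]
  refine Finset.sum_congr rfl fun k _ => ?_
  rw [Matrix.sub_apply]
  ring

lemma bil_sum {m n : ℕ} {ι : Type*} (s : Finset ι) (σ : ι → ℝ) (x : ι → Fin m → ℝ)
    (y : ι → Fin n → ℝ) (u : Fin m → ℝ) (v : Fin n → ℝ) :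
    bil u (∑ i ∈ s, σ i • Matrix.vecMulVec (x i) (y i)) v
      = ∑ i ∈ s, σ i * (dot u (x i) * dot (y i) v) := by
  rw [bil]
  have e1 : ∀ i' k, (∑ i ∈ s, σ i • Matrix.vecMulVec (x i) (y i)) i' k
      = ∑ i ∈ s, σ i * (x i i' * y i k) := by
    intro i' k
    rw [Matrix.sum_apply]
    exact Finset.sum_congr rfl fun i _ => by
      rw [Matrix.smul_apply, Matrix.vecMulVec_apply, smul_eq_mul]
  calc (∑ i', ∑ k, u i' * (∑ i ∈ s, σ i • Matrix.vecMulVec (x i) (y i)) i' k * v k)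
      = ∑ i', ∑ k, ∑ i ∈ s, σ i * ((u i' * x i i') * (y i k * v k)) := by
        refine Finset.sum_congr rfl fun i' _ => Finset.sum_congr rfl fun k _ => ?_
        rw [e1, Finset.mul_sum, Finset.sum_mul]
        exact Finset.sum_congr rfl fun i _ => by ring
    _ = ∑ i', ∑ i ∈ s, ∑ k, σ i * ((u i' * x i i') * (y i k * v k)) :=
        Finset.sum_congr rfl fun i' _ => swap_sum _ _
    _ = ∑ i ∈ s, ∑ i', ∑ k, σ i * ((u i' * x i i') * (y i k * v k)) := swap_sum _ _
    _ = ∑ i ∈ s, σ i * (dot u (x i) * dot (y i) v) := by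
        refine Finset.sum_congr rfl fun i _ => ?_
        rw [dot, dot, Finset.sum_mul_sum, Finset.mul_sum]
        refine Finset.sum_congr rfl fun i' _ => ?_
        rw [Finset.mul_sum]

/-- Cauchy–Schwarz + Bessel: sum of products of coefficients is at most 1. -/
lemma abs_sum_prod_le {p q : ℕ} {ι : Type*} (s : Finset ι)
    (P : ι → Fin p → ℝ) (Q : ι → Fin q → ℝ) (w1 : Fin p → ℝ) (w2 : Fin q → ℝ)
    (hPo : ∀ i ∈ s, ∀ j ∈ s, i ≠ j → dot (P i) (P j) = 0)
    (hPu : ∀ i ∈ s, dot (P i) (P i) ≤ 1)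
    (hQo : ∀ i ∈ s, ∀ j ∈ s, i ≠ j → dot (Q i) (Q j) = 0)
    (hQu : ∀ i ∈ s, dot (Q i) (Q i) ≤ 1)
    (hw1 : dot w1 w1 ≤ 1) (hw2 : dot w2 w2 ≤ 1) :
    (∑ i ∈ s, |dot w1 (P i)| * |dot w2 (Q i)|) ≤ 1 := by
  have h1 : (∑ i ∈ s, |dot w1 (P i)| * |dot w2 (Q i)|)
      ≤ Real.sqrt (∑ i ∈ s, |dot w1 (P i)|^2) * Real.sqrt (∑ i ∈ s, |dot w2 (Q i)|^2) :=
    Real.sum_mul_le_sqrt_mul_sqrt _ _ _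
  have h2 : (∑ i ∈ s, |dot w1 (P i)|^2) ≤ 1 := by
    calc (∑ i ∈ s, |dot w1 (P i)|^2) = ∑ i ∈ s, (dot w1 (P i))^2 :=
          Finset.sum_congr rfl fun i _ => sq_abs _
      _ ≤ dot w1 w1 := bessel s P hPo hPu w1
      _ ≤ 1 := hw1
  have h3 : (∑ i ∈ s, |dot w2 (Q i)|^2) ≤ 1 := by
    calc (∑ i ∈ s, |dot w2 (Q i)|^2) = ∑ i ∈ s, (dot w2 (Q i))^2 :=
          Finset.sum_congr rfl fun i _ => sq_abs _
      _ ≤ dot w2 w2 := bessel s Q hQo hQu w2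
      _ ≤ 1 := hw2
  calc (∑ i ∈ s, |dot w1 (P i)| * |dot w2 (Q i)|)
      ≤ Real.sqrt (∑ i ∈ s, |dot w1 (P i)|^2) * Real.sqrt (∑ i ∈ s, |dot w2 (Q i)|^2) := h1
    _ ≤ Real.sqrt 1 * Real.sqrt 1 := by
        have := Real.sqrt_le_sqrt h2
        have := Real.sqrt_le_sqrt h3
        have n2 : (0:ℝ) ≤ Real.sqrt (∑ i ∈ s, |dot w2 (Q i)|^2) := Real.sqrt_nonneg _
        have n1 : (0:ℝ) ≤ Real.sqrt 1 := Real.sqrt_nonneg _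
        nlinarith [Real.sqrt_nonneg (∑ i ∈ s, |dot w1 (P i)|^2)]
    _ = 1 := by rw [Real.sqrt_one, mul_one]

lemma bil_add {m n : ℕ} (u : Fin m → ℝ) (A C : Matrix (Fin m) (Fin n) ℝ) (v : Fin n → ℝ) :
    bil u (A + C) v = bil u A v + bil u C v := by
  rw [bil, bil, bil, ← Finset.sum_add_distrib]
  refine Finset.sum_congr rfl fun i _ => ?_
  rw [← Finset.sum_add_distrib]
  refine Finset.sum_congr rfl fun k _ => ?_
  rw [Matrix.add_apply]
  ring

lemma bil_le_op {m n : ℕ} (E : Matrix (Fin m) (Fin n) ℝ) (u : Fin m → ℝ) (v : Fin n → ℝ) :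
    bil u E v ≤ opNorm E * (Real.sqrt (dot u u) * Real.sqrt (dot v v)) :=
  bil_le_opNorm E u v

end SVTaux

set_option maxHeartbeats 2000000 in
/-- Chatterjee's singular value thresholding lemma.  Let `B, D` be
`m × n` real matrices (`m ≤ n`) and let `D = Σ_i σᵢ xᵢ yᵢᵀ` be a singular value
decomposition of `D` (`σ₁ ≥ … ≥ σ_m ≥ 0`, `xᵢ`, `yᵢ` orthonormal).  Fix `δ > 0` and set
`B̂ = Σ_{i : σᵢ > (1+δ)‖D − B‖} σᵢ xᵢ yᵢᵀ`.  Then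
`‖B̂ − B‖_F ≤ K(δ)(‖D − B‖ ‖B‖_*)^{1/2}` with `K(δ) = (4+2δ)√(2/δ) + √(2+δ)`. -/
theorem svt_lemma (m n : ℕ) (hmn : m ≤ n) (B D : Matrix (Fin m) (Fin n) ℝ)
    (σ : Fin m → ℝ) (x : Fin m → Fin m → ℝ) (y : Fin m → Fin n → ℝ)
    (hσdesc : ∀ i j : Fin m, i ≤ j → σ j ≤ σ i) (hσpos : ∀ i, 0 ≤ σ i)
    (hx : ∀ i j, ∑ k, x i k * x j k = if i = j then 1 else 0)
    (hy : ∀ i j, ∑ k, y i k * y j k = if i = j then 1 else 0)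
    (hD : D = ∑ i : Fin m, σ i • Matrix.vecMulVec (x i) (y i))
    (δ : ℝ) (hδ : 0 < δ) :
    Real.sqrt (frobSq
        ((∑ i ∈ Finset.univ.filter (fun i => (1 + δ) * opNorm (D - B) < σ i),
          σ i • Matrix.vecMulVec (x i) (y i)) - B)) ≤
      ((4 + 2 * δ) * Real.sqrt (2 / δ) + Real.sqrt (2 + δ)) *
        Real.sqrt (opNorm (D - B) * nuclearNorm B) := by
  classical
  obtain ⟨τ, a, b, hτ0, had, hbo, hbu, hbu1, hBrep, hτsum, hτop, hτfrob⟩ := SVTaux.exists_svd B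
  set E : Matrix (Fin m) (Fin n) ℝ := D - B with hE
  set ε : ℝ := opNorm E with hεdef
  have hε0 : 0 ≤ ε := SVTaux.opNorm_nonneg E
  set S : Finset (Fin m) := Finset.univ.filter (fun i => (1 + δ) * ε < σ i) with hSdef
  set Bh : Matrix (Fin m) (Fin n) ℝ := ∑ i ∈ S, σ i • Matrix.vecMulVec (x i) (y i) with hBhdef
  set M : Matrix (Fin m) (Fin n) ℝ := Bh - B with hMdef
  obtain ⟨ρ, p, q, hρ0, hpd, hqo, hqu, hqu1, hMrep, hρsum, hρop, hρfrob⟩ := SVTaux.exists_svd M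
  have hxd : ∀ i j, SVTaux.dot (x i) (x j) = if i = j then (1:ℝ) else 0 := hx
  have hyd : ∀ i j, SVTaux.dot (y i) (y j) = if i = j then (1:ℝ) else 0 := hy
  have hN0 : 0 ≤ nuclearNorm B := by
    rw [← hτsum]; exact Finset.sum_nonneg fun j _ => hτ0 j
  -- orthogonality helpers
  have hxo : ∀ (s : Finset (Fin m)), ∀ i ∈ s, ∀ j ∈ s, i ≠ j → SVTaux.dot (x i) (x j) = 0 :=
    fun s i _ j _ hij => by rw [hxd i j, if_neg hij]
  have hxu : ∀ (s : Finset (Fin m)), ∀ i ∈ s, SVTaux.dot (x i) (x i) ≤ 1 :=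
    fun s i _ => by rw [hxd i i, if_pos rfl]
  have hyo : ∀ (s : Finset (Fin m)), ∀ i ∈ s, ∀ j ∈ s, i ≠ j → SVTaux.dot (y i) (y j) = 0 :=
    fun s i _ j _ hij => by rw [hyd i j, if_neg hij]
  have hyu : ∀ (s : Finset (Fin m)), ∀ i ∈ s, SVTaux.dot (y i) (y i) ≤ 1 :=
    fun s i _ => by rw [hyd i i, if_pos rfl]
  have hpo : ∀ (s : Finset (Fin m)), ∀ i ∈ s, ∀ j ∈ s, i ≠ j → SVTaux.dot (p i) (p j) = 0 :=
    fun s i _ j _ hij => by rw [hpd i j, if_neg hij]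
  have hpu : ∀ (s : Finset (Fin m)), ∀ i ∈ s, SVTaux.dot (p i) (p i) ≤ 1 :=
    fun s i _ => by rw [hpd i i, if_pos rfl]
  have hqo' : ∀ (s : Finset (Fin m)), ∀ i ∈ s, ∀ j ∈ s, i ≠ j → SVTaux.dot (q i) (q j) = 0 :=
    fun s i _ j _ hij => hqo i j hij
  have hqu' : ∀ (s : Finset (Fin m)), ∀ i ∈ s, SVTaux.dot (q i) (q i) ≤ 1 := fun s i _ => hqu i
  have hao : ∀ (s : Finset (Fin m)), ∀ i ∈ s, ∀ j ∈ s, i ≠ j → SVTaux.dot (a i) (a j) = 0 :=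
    fun s i _ j _ hij => by rw [had i j, if_neg hij]
  have hau : ∀ (s : Finset (Fin m)), ∀ i ∈ s, SVTaux.dot (a i) (a i) ≤ 1 :=
    fun s i _ => by rw [had i i, if_pos rfl]
  have hbo' : ∀ (s : Finset (Fin m)), ∀ i ∈ s, ∀ j ∈ s, i ≠ j → SVTaux.dot (b i) (b j) = 0 :=
    fun s i _ j _ hij => hbo i j hij
  have hbu' : ∀ (s : Finset (Fin m)), ∀ i ∈ s, SVTaux.dot (b i) (b i) ≤ 1 := fun s i _ => hbu i
  -- matrix representations
  have hBmat : B = ∑ j, τ j • Matrix.vecMulVec (a j) (b j) := by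
    ext i k
    rw [hBrep i k, Matrix.sum_apply]
    exact Finset.sum_congr rfl fun j _ => by
      rw [Matrix.smul_apply, Matrix.vecMulVec_apply, smul_eq_mul]
  have hMmat : M = ∑ l, ρ l • Matrix.vecMulVec (p l) (q l) := by
    ext i k
    rw [hMrep i k, Matrix.sum_apply]
    exact Finset.sum_congr rfl fun j _ => by
      rw [Matrix.smul_apply, Matrix.vecMulVec_apply, smul_eq_mul]
  -- bilinear form of M along its own singular vectors
  have hbilM : ∀ l, SVTaux.bil (p l) M (q l) = ρ l := by
    intro l
    rw [hMmat, SVTaux.bil_sum Finset.univ ρ p q]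
    rw [Finset.sum_eq_single l
      (fun j _ hjl => by rw [hpd l j, if_neg fun h => hjl h.symm]; ring)
      (fun h => absurd (Finset.mem_univ l) h)]
    rw [hpd l l, if_pos rfl]
    by_cases hl : ρ l = 0
    · rw [hl]; ring
    · rw [SVTaux.dot_comm, hqu1 l hl]; ring
  -- bilinear form of D along its singular vectors
  have hDbil : ∀ i, SVTaux.bil (x i) D (y i) = σ i := by
    intro i
    rw [hD, SVTaux.bil_sum Finset.univ σ x y]
    rw [Finset.sum_eq_single i
      (fun j _ hji => by rw [hxd i j, if_neg fun h => hji h.symm]; ring)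
      (fun h => absurd (Finset.mem_univ i) h)]
    rw [hxd i i, if_pos rfl, hyd i i, if_pos rfl]
    ring
  -- operator norm bound on bilinear forms of E
  have hEbil : ∀ (u : Fin m → ℝ) (v : Fin n → ℝ), SVTaux.dot u u ≤ 1 → SVTaux.dot v v ≤ 1 →
      SVTaux.bil u E v ≤ ε := by
    intro u v hu hv
    have h := SVTaux.bil_le_op E u v
    have h1 : Real.sqrt (SVTaux.dot u u) ≤ 1 := by
      rw [show (1:ℝ) = Real.sqrt 1 from (Real.sqrt_one).symm]
      exact Real.sqrt_le_sqrt hu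
    have h2 : Real.sqrt (SVTaux.dot v v) ≤ 1 := by
      rw [show (1:ℝ) = Real.sqrt 1 from (Real.sqrt_one).symm]
      exact Real.sqrt_le_sqrt hv
    have h3 : Real.sqrt (SVTaux.dot u u) * Real.sqrt (SVTaux.dot v v) ≤ 1 :=
      mul_le_one₀ h1 (Real.sqrt_nonneg _) h2
    nlinarith [Real.sqrt_nonneg (SVTaux.dot u u), Real.sqrt_nonneg (SVTaux.dot v v)]
  -- membership in S
  have hmemS : ∀ i, i ∈ S ↔ (1 + δ) * ε < σ i := by
    intro i; rw [hSdef, Finset.mem_filter]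
    simp
  -- D - Bh as the complementary sum
  have hsplit : (∑ i ∈ Finset.univ \ S, σ i • Matrix.vecMulVec (x i) (y i)) + Bh = D := by
    rw [hD, hBhdef]
    exact Finset.sum_sdiff (Finset.filter_subset _ _)
  -- per-index bound : ρ l ≤ (2+δ) ε
  have hρle : ∀ l, ρ l ≤ (2 + δ) * ε := by
    intro l
    by_cases hl : ρ l = 0
    · rw [hl]; exact mul_nonneg (by linarith) hε0
    · have hq1 : SVTaux.dot (q l) (q l) = 1 := hqu1 l hl
      have hp1 : SVTaux.dot (p l) (p l) = 1 := by rw [hpd l l, if_pos rfl]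
      rw [← hbilM l]
      have hMsplit : M = (Bh - D) + E := by
        rw [hMdef, hE]
        exact (sub_add_sub_cancel Bh D B).symm
      rw [hMsplit, SVTaux.bil_add]
      have hBhD : SVTaux.bil (p l) (Bh - D) (q l)
          = -(∑ i ∈ Finset.univ \ S, σ i * (SVTaux.dot (p l) (x i) * SVTaux.dot (y i) (q l))) := by
        rw [SVTaux.bil_sub, ← hsplit, SVTaux.bil_add, SVTaux.bil_sum (Finset.univ \ S) σ x y]
        ring
      have h1 : SVTaux.bil (p l) (Bh - D) (q l) ≤ (1 + δ) * ε := by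
        rw [hBhD]
        have step1 : -(∑ i ∈ Finset.univ \ S, σ i * (SVTaux.dot (p l) (x i) * SVTaux.dot (y i) (q l)))
            ≤ ∑ i ∈ Finset.univ \ S, ((1+δ)*ε) * (|SVTaux.dot (x i) (p l)| * |SVTaux.dot (y i) (q l)|) := by
          rw [neg_le]
          rw [← Finset.sum_neg_distrib]
          refine Finset.sum_le_sum fun i hi => ?_
          have hσle : σ i ≤ (1+δ)*ε := by
            have := (Finset.mem_sdiff.1 hi).2
            have h4 := (hmemS i).not.1 this
            linarith [not_lt.1 fun hcon => h4 hcon]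
          have habs : σ i * (SVTaux.dot (p l) (x i) * SVTaux.dot (y i) (q l))
              ≥ -(σ i * (|SVTaux.dot (x i) (p l)| * |SVTaux.dot (y i) (q l)|)) := by
            rw [SVTaux.dot_comm (x i) (p l)]
            have := abs_nonneg (SVTaux.dot (p l) (x i))
            have := abs_nonneg (SVTaux.dot (y i) (q l))
            have h5 := neg_abs_le (SVTaux.dot (p l) (x i) * SVTaux.dot (y i) (q l))
            rw [abs_mul] at h5
            nlinarith [hσpos i, abs_nonneg (SVTaux.dot (p l) (x i) * SVTaux.dot (y i) (q l))]
          have hprod : σ i * (|SVTaux.dot (x i) (p l)| * |SVTaux.dot (y i) (q l)|)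
              ≤ ((1+δ)*ε) * (|SVTaux.dot (x i) (p l)| * |SVTaux.dot (y i) (q l)|) := by
            apply mul_le_mul_of_nonneg_right hσle
            positivity
          linarith
        have step2 : (∑ i ∈ Finset.univ \ S, ((1+δ)*ε) * (|SVTaux.dot (x i) (p l)| * |SVTaux.dot (y i) (q l)|))
            ≤ ((1+δ)*ε) * 1 := by
          rw [← Finset.mul_sum]
          apply mul_le_mul_of_nonneg_left _ (by positivity)
          have := SVTaux.abs_sum_prod_le (Finset.univ \ S) x y (p l) (q l)
            (hxo _) (hxu _) (hyo _) (hyu _) (le_of_eq hp1) (le_of_eq hq1)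
          calc (∑ i ∈ Finset.univ \ S, |SVTaux.dot (x i) (p l)| * |SVTaux.dot (y i) (q l)|)
              = ∑ i ∈ Finset.univ \ S, |SVTaux.dot (p l) (x i)| * |SVTaux.dot (q l) (y i)| := by
                refine Finset.sum_congr rfl fun i _ => ?_
                rw [SVTaux.dot_comm (x i) (p l), SVTaux.dot_comm (y i) (q l)]
            _ ≤ 1 := SVTaux.abs_sum_prod_le (Finset.univ \ S) x y (p l) (q l)
                (hxo _) (hxu _) (hyo _) (hyu _) (le_of_eq hp1) (le_of_eq hq1)
        linarith [step1, step2]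
      have h2 : SVTaux.bil (p l) E (q l) ≤ ε := hEbil _ _ (le_of_eq hp1) (le_of_eq hq1)
      linarith
  -- sum bound : ∑ ρ ≤ ∑_{S} σ + N
  have hAsum : (∑ l, SVTaux.bil (p l) Bh (q l)) ≤ ∑ i ∈ S, σ i := by
    have e : ∀ l, SVTaux.bil (p l) Bh (q l)
        = ∑ i ∈ S, σ i * (SVTaux.dot (p l) (x i) * SVTaux.dot (y i) (q l)) := by
      intro l; rw [hBhdef, SVTaux.bil_sum S σ x y]
    simp only [e]
    rw [Finset.sum_comm]
    refine Finset.sum_le_sum fun i _ => ?_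
    have hb : (∑ l, σ i * (SVTaux.dot (p l) (x i) * SVTaux.dot (y i) (q l)))
        = σ i * ∑ l, SVTaux.dot (p l) (x i) * SVTaux.dot (y i) (q l) := by
      rw [Finset.mul_sum]
    rw [hb]
    have hle1 : (∑ l, SVTaux.dot (p l) (x i) * SVTaux.dot (y i) (q l)) ≤ 1 := by
      calc (∑ l, SVTaux.dot (p l) (x i) * SVTaux.dot (y i) (q l))
          ≤ ∑ l, |SVTaux.dot (x i) (p l)| * |SVTaux.dot (y i) (q l)| := by
            refine Finset.sum_le_sum fun l _ => ?_
            rw [SVTaux.dot_comm (x i) (p l), ← abs_mul]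
            exact le_abs_self _
        _ ≤ 1 := SVTaux.abs_sum_prod_le Finset.univ p q (x i) (y i)
            (hpo _) (hpu _) (hqo' _) (hqu' _) (hxu Finset.univ i (Finset.mem_univ i))
            (hyu Finset.univ i (Finset.mem_univ i))
    nlinarith [hσpos i]
  have hBsum : -(∑ l, SVTaux.bil (p l) B (q l)) ≤ nuclearNorm B := by
    have e : ∀ l, SVTaux.bil (p l) B (q l)
        = ∑ j, τ j * (SVTaux.dot (p l) (a j) * SVTaux.dot (b j) (q l)) := by
      intro l; rw [hBmat, SVTaux.bil_sum Finset.univ τ a b]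
    simp only [e]
    rw [Finset.sum_comm, ← hτsum]
    rw [← Finset.sum_neg_distrib]
    refine Finset.sum_le_sum fun j _ => ?_
    have hb : -(∑ l, τ j * (SVTaux.dot (p l) (a j) * SVTaux.dot (b j) (q l)))
        = τ j * ∑ l, -(SVTaux.dot (p l) (a j) * SVTaux.dot (b j) (q l)) := by
      rw [Finset.mul_sum, ← Finset.sum_neg_distrib]
      exact Finset.sum_congr rfl fun l _ => by ring
    rw [hb]
    have hle1 : (∑ l, -(SVTaux.dot (p l) (a j) * SVTaux.dot (b j) (q l))) ≤ 1 := by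
      calc (∑ l, -(SVTaux.dot (p l) (a j) * SVTaux.dot (b j) (q l)))
          ≤ ∑ l, |SVTaux.dot (a j) (p l)| * |SVTaux.dot (b j) (q l)| := by
            refine Finset.sum_le_sum fun l _ => ?_
            rw [SVTaux.dot_comm (a j) (p l), ← abs_mul]
            exact neg_le_abs _
        _ ≤ 1 := SVTaux.abs_sum_prod_le Finset.univ p q (a j) (b j)
            (hpo _) (hpu _) (hqo' _) (hqu' _) (hau Finset.univ j (Finset.mem_univ j)) (hbu j)
    nlinarith [hτ0 j]
  have hρsumle : (∑ l, ρ l) ≤ (∑ i ∈ S, σ i) + nuclearNorm B := by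
    have e : ∀ l, ρ l = SVTaux.bil (p l) Bh (q l) - SVTaux.bil (p l) B (q l) := by
      intro l
      rw [← hbilM l, hMdef, SVTaux.bil_sub]
    calc (∑ l, ρ l) = (∑ l, SVTaux.bil (p l) Bh (q l)) - ∑ l, SVTaux.bil (p l) B (q l) := by
          rw [← Finset.sum_sub_distrib]
          exact Finset.sum_congr rfl fun l _ => e l
      _ ≤ (∑ i ∈ S, σ i) + nuclearNorm B := by linarith [hAsum, hBsum]
  -- bound on ∑_{S} σ via B's nuclear norm
  have hxBy : ∀ i, σ i - ε ≤ SVTaux.bil (x i) B (y i) := by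
    intro i
    have hBDE : B = D - E := (sub_sub_cancel D B).symm
    have h1 : SVTaux.bil (x i) B (y i) = σ i - SVTaux.bil (x i) E (y i) := by
      rw [hBDE, SVTaux.bil_sub, hDbil i]
    have h2 : SVTaux.bil (x i) E (y i) ≤ ε :=
      hEbil _ _ (hxu Finset.univ i (Finset.mem_univ i)) (hyu Finset.univ i (Finset.mem_univ i))
    linarith
  have hSB : (∑ i ∈ S, SVTaux.bil (x i) B (y i)) ≤ nuclearNorm B := by
    have e : ∀ i, SVTaux.bil (x i) B (y i)
        = ∑ j, τ j * (SVTaux.dot (x i) (a j) * SVTaux.dot (b j) (y i)) := by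
      intro i; rw [hBmat, SVTaux.bil_sum Finset.univ τ a b]
    rw [Finset.sum_congr rfl fun i _ => e i, Finset.sum_comm, ← hτsum]
    refine Finset.sum_le_sum fun j _ => ?_
    have hb : (∑ i ∈ S, τ j * (SVTaux.dot (x i) (a j) * SVTaux.dot (b j) (y i)))
        = τ j * ∑ i ∈ S, SVTaux.dot (x i) (a j) * SVTaux.dot (b j) (y i) := by
      rw [Finset.mul_sum]
    rw [hb]
    have hle1 : (∑ i ∈ S, SVTaux.dot (x i) (a j) * SVTaux.dot (b j) (y i)) ≤ 1 := by
      calc (∑ i ∈ S, SVTaux.dot (x i) (a j) * SVTaux.dot (b j) (y i))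
          ≤ ∑ i ∈ S, |SVTaux.dot (a j) (x i)| * |SVTaux.dot (b j) (y i)| := by
            refine Finset.sum_le_sum fun i _ => ?_
            rw [SVTaux.dot_comm (a j) (x i), ← abs_mul]
            exact le_abs_self _
        _ ≤ 1 := SVTaux.abs_sum_prod_le S x y (a j) (b j)
            (hxo _) (hxu _) (hyo _) (hyu _) (hau Finset.univ j (Finset.mem_univ j)) (hbu j)
    nlinarith [hτ0 j]
  have hSsum : (∑ i ∈ S, (σ i - ε)) ≤ nuclearNorm B := by
    calc (∑ i ∈ S, (σ i - ε)) ≤ ∑ i ∈ S, SVTaux.bil (x i) B (y i) :=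
          Finset.sum_le_sum fun i _ => hxBy i
      _ ≤ nuclearNorm B := hSB
  have hcard : (S.card : ℝ) * (δ * ε) ≤ ∑ i ∈ S, (σ i - ε) := by
    have h := Finset.card_nsmul_le_sum S (fun i => σ i - ε) (δ * ε) (fun i hi => by
      have h2 := (hmemS i).1 hi
      show δ * ε ≤ σ i - ε
      nlinarith)
    rwa [nsmul_eq_mul] at h
  have hSσ : (∑ i ∈ S, σ i) ≤ nuclearNorm B + (S.card : ℝ) * ε := by
    have h1 : (∑ i ∈ S, (σ i - ε)) = (∑ i ∈ S, σ i) - (S.card : ℝ) * ε := by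
      rw [Finset.sum_sub_distrib, Finset.sum_const, nsmul_eq_mul]
    linarith [hSsum, h1.symm.le, h1.le]
  -- combine everything
  have h2δ : (0:ℝ) ≤ 2 + δ := by linarith
  have hfM : frobSq M ≤ (2 + δ) * ε * ((∑ i ∈ S, σ i) + nuclearNorm B) := by
    calc frobSq M = ∑ l, (ρ l)^2 := hρfrob.symm
      _ ≤ ∑ l, ((2 + δ) * ε) * ρ l := Finset.sum_le_sum fun l _ => by
          rw [sq]
          exact mul_le_mul_of_nonneg_right (hρle l) (hρ0 l)
      _ = ((2 + δ) * ε) * ∑ l, ρ l := by rw [Finset.mul_sum]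
      _ ≤ ((2 + δ) * ε) * ((∑ i ∈ S, σ i) + nuclearNorm B) :=
          mul_le_mul_of_nonneg_left hρsumle (mul_nonneg h2δ hε0)
  have hcard0 : (0:ℝ) ≤ (S.card : ℝ) := Nat.cast_nonneg _
  have hcε : (S.card : ℝ) * ε * ε ≤ ε * nuclearNorm B / δ := by
    rw [le_div_iff₀ hδ]
    have := mul_le_mul_of_nonneg_right (hcard.trans hSsum) hε0
    nlinarith
  have key : frobSq M ≤ (2 + δ) * (2 + 1/δ) * (ε * nuclearNorm B) := by
    have c1 : frobSq M ≤ (2 + δ) * ε * ((nuclearNorm B + (S.card : ℝ) * ε) + nuclearNorm B) := by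
      calc frobSq M ≤ (2 + δ) * ε * ((∑ i ∈ S, σ i) + nuclearNorm B) := hfM
        _ ≤ (2 + δ) * ε * ((nuclearNorm B + (S.card : ℝ) * ε) + nuclearNorm B) :=
            mul_le_mul_of_nonneg_left (by linarith) (mul_nonneg h2δ hε0)
    have c2 : (2 + δ) * ε * ((nuclearNorm B + (S.card : ℝ) * ε) + nuclearNorm B)
        = (2 + δ) * (2 * (ε * nuclearNorm B) + (S.card : ℝ) * ε * ε) := by ring
    have c3 : (2 + δ) * (2 * (ε * nuclearNorm B) + (S.card : ℝ) * ε * ε)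
        ≤ (2 + δ) * (2 * (ε * nuclearNorm B) + ε * nuclearNorm B / δ) :=
      mul_le_mul_of_nonneg_left (by linarith) h2δ
    have c4 : (2 + δ) * (2 * (ε * nuclearNorm B) + ε * nuclearNorm B / δ)
        = (2 + δ) * (2 + 1/δ) * (ε * nuclearNorm B) := by
      field_simp
    linarith [c1, c2.le, c2.ge, c3, c4.le, c4.ge]
  -- final arithmetic
  set K : ℝ := (4 + 2 * δ) * Real.sqrt (2 / δ) + Real.sqrt (2 + δ) with hKdef
  have hs0 : (0:ℝ) ≤ Real.sqrt (2 / δ) := Real.sqrt_nonneg _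
  have ht0 : (0:ℝ) ≤ Real.sqrt (2 + δ) := Real.sqrt_nonneg _
  have hK0 : 0 ≤ K := by
    rw [hKdef]
    have : (0:ℝ) ≤ 4 + 2 * δ := by linarith
    positivity
  have hεN0 : 0 ≤ ε * nuclearNorm B := mul_nonneg hε0 hN0
  have hKK : (2 + δ) * (2 + 1/δ) ≤ K^2 := by
    have hs : (Real.sqrt (2 / δ))^2 = 2 / δ := Real.sq_sqrt (by positivity)
    have ht : (Real.sqrt (2 + δ))^2 = 2 + δ := Real.sq_sqrt (by linarith)
    have hexp : K^2 = (4 + 2*δ)^2 * (2/δ) + 2 * ((4 + 2*δ) * Real.sqrt (2/δ)) * Real.sqrt (2+δ)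
        + (2 + δ) := by
      rw [hKdef, add_sq, mul_pow, hs, ht]
    have hcross : 0 ≤ 2 * ((4 + 2*δ) * Real.sqrt (2/δ)) * Real.sqrt (2+δ) := by
      have : (0:ℝ) ≤ 4 + 2 * δ := by linarith
      positivity
    have hmain : (2 + δ) * (2 + 1/δ) ≤ (4 + 2*δ)^2 * (2/δ) + (2 + δ) := by
      rw [show (2 + δ) * (2 + 1/δ) = ((2 + δ) * (2*δ + 1))/δ by field_simp,
        show (4 + 2*δ)^2 * (2/δ) + (2 + δ) = ((4 + 2*δ)^2 * 2 + (2 + δ)*δ)/δ by field_simp]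
      rw [div_le_div_iff₀ hδ hδ]
      nlinarith [sq_nonneg δ, hδ]
    linarith [hexp.le, hexp.ge, hcross, hmain]
  have hfinal : Real.sqrt (frobSq M) ≤ Real.sqrt (K^2 * (ε * nuclearNorm B)) := by
    apply Real.sqrt_le_sqrt
    calc frobSq M ≤ (2 + δ) * (2 + 1/δ) * (ε * nuclearNorm B) := key
      _ ≤ K^2 * (ε * nuclearNorm B) := mul_le_mul_of_nonneg_right hKK hεN0
  rwa [Real.sqrt_mul (sq_nonneg _), Real.sqrt_sq hK0] at hfinal


end
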